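/- Let H be a real Hilbert space, A : H → H a continuous self-adjoint nonnegative linear operator, 0 ≤ p ≤ 1, γ ≥ 1, and u₀ ∈ H with ⟨Au₀,u₀⟩ > 0. Let u : [0,∞) → H be a C¹ solution of u'(t) + (1+t)^{p} ⟨Au(t),u(t)⟩^γ A u(t) = 0 with u(0) = u₀. Then there exists a constant γ₅ > 0 (depending only on u₀, A, γ, p) such that the following three integrals are bounded by γ₅: (i) ∫₀^∞ |u'(t)|² (1+t)^{p} dt = ∫₀^∞ ⟨Au(t),u(t)⟩^{2γ} |Au(t)|² (1+t)^{3p} dt; (ii) ∫₀^∞ ⟨Au(t),u(t)⟩^{3γ} ⟨A²u(t), Au(t)⟩ (1+t)^{5p} dt; (iii) ∫₀^∞ [ ⟨Au(t),u(t)⟩^{4γ} (1+t)^{7p} + ⟨Au(t),u(t)⟩^{3γ} (1+t)^{5p} ] |A²u(t)|² dt. -/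

import Mathlib

open Real MeasureTheory Filter Set Topology
open scoped RealInnerProductSpace
set_option linter.unusedVariables false
set_option maxHeartbeats 1000000

/-- `u` (with derivative `u'`) is a global C¹ solution on `[0,∞)` of the parabolic
Cauchy problem `u' + (1+t)^{p} ⟨Au,u⟩^γ A u = 0`, `u(0) = u₀`. -/
def IsParSolution {H : Type*} [NormedAddCommGroup H] [InnerProductSpace ℝ H]
    (A : H →L[ℝ] H) (p γ : ℝ) (u₀ : H) (u u' : ℝ → H) : Prop :=
  u 0 = u₀ ∧
  (∀ t ∈ Set.Ici (0:ℝ), HasDerivWithinAt u (u' t) (Set.Ici 0) t) ∧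
  ContinuousOn u' (Set.Ici 0) ∧
  (∀ t ∈ Set.Ici (0:ℝ),
    u' t + ((1+t) ^ p * ⟪A (u t), u t⟫ ^ γ) • A (u t) = 0)



/-- Cauchy–Schwarz for the semidefinite form `⟪A·,·⟫`. -/
lemma par_cs {H : Type*} [NormedAddCommGroup H] [InnerProductSpace ℝ H]
    (A : H →L[ℝ] H)
    (hA_sa : ∀ x y : H, ⟪A x, y⟫ = ⟪x, A y⟫)
    (hA_nn : ∀ x : H, 0 ≤ ⟪A x, x⟫) (x y : H) :
    ⟪A x, y⟫ ^ 2 ≤ ⟪A x, x⟫ * ⟪A y, y⟫ := by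
  have h : ∀ r : ℝ, 0 ≤ ⟪A y, y⟫ * (r * r) + (2 * ⟪A x, y⟫) * r + ⟪A x, x⟫ := by
    intro r
    have h0 := hA_nn (x + r • y)
    have hAe : A (x + r • y) = A x + r • A y := by simp
    have hsym : ⟪A y, x⟫ = ⟪A x, y⟫ := by rw [hA_sa y x, real_inner_comm]
    rw [hAe, inner_add_left, inner_add_right, inner_add_right, real_inner_smul_left,
      real_inner_smul_left, real_inner_smul_right, real_inner_smul_right, hsym] at h0
    nlinarith [h0]
  have hd := discrim_le_zero h
  rw [discrim] at hd
  nlinarith [hd]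

/-- `‖A x‖² ≤ ‖A‖ ⟪A x, x⟫` for a nonnegative self-adjoint operator. -/
lemma par_sq_norm_le {H : Type*} [NormedAddCommGroup H] [InnerProductSpace ℝ H]
    (A : H →L[ℝ] H)
    (hA_sa : ∀ x y : H, ⟪A x, y⟫ = ⟪x, A y⟫)
    (hA_nn : ∀ x : H, 0 ≤ ⟪A x, x⟫) (x : H) :
    ‖A x‖ ^ 2 ≤ ‖A‖ * ⟪A x, x⟫ := by
  have h1 := par_cs A hA_sa hA_nn x (A x)
  rw [real_inner_self_eq_norm_sq] at h1
  have h2 : ⟪A (A x), A x⟫ ≤ ‖A‖ * ‖A x‖ ^ 2 := by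
    calc ⟪A (A x), A x⟫ ≤ ‖A (A x)‖ * ‖A x‖ := real_inner_le_norm _ _
      _ ≤ (‖A‖ * ‖A x‖) * ‖A x‖ := by gcongr; exact A.le_opNorm _
      _ = ‖A‖ * ‖A x‖ ^ 2 := by ring
  rcases eq_or_lt_of_le (sq_nonneg ‖A x‖) with hs | hs
  · rw [← hs]
    exact mul_nonneg (norm_nonneg _) (hA_nn x)
  · nlinarith [hA_nn x, h1, h2, hs]

/-- From boundedness of all the finite integrals of a nonnegative continuous function,
integrability on `[0,∞)` and the bound for the improper integral. -/
lemma par_int_bound (f : ℝ → ℝ) (hf : ContinuousOn f (Set.Ici 0))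
    (hnn : ∀ t ∈ Set.Ici (0:ℝ), 0 ≤ f t) (C : ℝ)
    (hC : ∀ T, 0 ≤ T → (∫ t in (0:ℝ)..T, f t) ≤ C) :
    IntegrableOn f (Set.Ici (0:ℝ)) ∧ (∫ t in Set.Ici (0:ℝ), f t) ≤ C := by
  have hIoc : ∀ T : ℝ, IntegrableOn f (Set.Ioc 0 T) := by
    intro T
    rcases le_or_gt T 0 with h | h
    · rw [Set.Ioc_eq_empty (by exact fun hc => absurd (lt_of_lt_of_le hc h) (lt_irrefl 0))]
      exact integrableOn_empty
    · exact ((hf.mono (Set.Icc_subset_Ici_self)).integrableOn_Icc).mono_set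
        Set.Ioc_subset_Icc_self
  have hbound : ∀ᶠ (i : ℝ) in atTop, (∫ x in (0:ℝ)..i, ‖f x‖) ≤ C := by
    filter_upwards [eventually_ge_atTop (0:ℝ)] with T hT
    have heq : (∫ x in (0:ℝ)..T, ‖f x‖) = ∫ x in (0:ℝ)..T, f x := by
      apply intervalIntegral.integral_congr
      intro x hx
      rw [Set.uIcc_of_le hT] at hx
      exact Real.norm_of_nonneg (hnn x hx.1)
    rw [heq]; exact hC T hT
  have hInt : IntegrableOn f (Set.Ioi 0) :=
    integrableOn_Ioi_of_intervalIntegral_norm_bounded C 0 hIoc tendsto_id hbound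
  have hIci : IntegrableOn f (Set.Ici 0) := by
    rwa [integrableOn_Ici_iff_integrableOn_Ioi]
  refine ⟨hIci, ?_⟩
  rw [MeasureTheory.integral_Ici_eq_integral_Ioi]
  have htd : Tendsto (fun T => ∫ x in (0:ℝ)..T, f x) atTop (𝓝 (∫ x in Set.Ioi 0, f x)) :=
    intervalIntegral_tendsto_integral_Ioi 0 hInt tendsto_id
  refine le_of_tendsto htd ?_
  filter_upwards [eventually_ge_atTop (0:ℝ)] with T hT
  exact hC T hT

/-- FTC estimate scheme: if `Φ ≥ 0` with `Φ' = r - 2 f` then `2∫₀ᵀ f ≤ Φ 0 + ∫₀ᵀ r`. -/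
lemma par_ftc_est {Φ f r : ℝ → ℝ}
    (hΦc : ContinuousOn Φ (Set.Ici 0))
    (hΦnn : ∀ t ∈ Set.Ici (0:ℝ), 0 ≤ Φ t)
    (hfc : ContinuousOn f (Set.Ici 0)) (hrc : ContinuousOn r (Set.Ici 0))
    (hd : ∀ t ∈ Set.Ioi (0:ℝ), HasDerivAt Φ (r t - 2 * f t) t)
    {T : ℝ} (hT : 0 ≤ T) :
    2 * ∫ t in (0:ℝ)..T, f t ≤ Φ 0 + ∫ t in (0:ℝ)..T, r t := by
  have hfint : IntervalIntegrable f volume 0 T :=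
    (hfc.mono (by rw [Set.uIcc_of_le hT]; exact Set.Icc_subset_Ici_self)).intervalIntegrable
  have hrint : IntervalIntegrable r volume 0 T :=
    (hrc.mono (by rw [Set.uIcc_of_le hT]; exact Set.Icc_subset_Ici_self)).intervalIntegrable
  have hftc : (∫ t in (0:ℝ)..T, (r t - 2 * f t)) = Φ T - Φ 0 := by
    apply intervalIntegral.integral_eq_sub_of_hasDeriv_right_of_le hT
      (hΦc.mono Set.Icc_subset_Ici_self)
      (fun x hx => ((hd x hx.1).hasDerivWithinAt))
    exact hrint.sub (hfint.const_mul 2)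
  rw [intervalIntegral.integral_sub hrint (hfint.const_mul 2),
    intervalIntegral.integral_const_mul] at hftc
  have hT0 := hΦnn T (by exact hT)
  linarith [hftc]


lemma par_derivs {H : Type*} [NormedAddCommGroup H] [InnerProductSpace ℝ H]
    (A : H →L[ℝ] H)
    (hA_sa : ∀ x y : H, ⟪A x, y⟫ = ⟪x, A y⟫)
    (p γ : ℝ) (u u' : ℝ → H)
    (hud : ∀ t ∈ Set.Ici (0:ℝ), HasDerivWithinAt u (u' t) (Set.Ici 0) t)
    (hueq : ∀ t ∈ Set.Ici (0:ℝ),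
      u' t = -(((1+t) ^ p * ⟪A (u t), u t⟫ ^ γ) • A (u t)))
    {t : ℝ} (ht : t ∈ Set.Ioi (0:ℝ)) :
    HasDerivAt (fun s => ⟪A (u s), u s⟫)
      (-(2 * ((1+t) ^ p * ⟪A (u t), u t⟫ ^ γ)) * ‖A (u t)‖ ^ 2) t ∧
    HasDerivAt (fun s => ‖A (u s)‖ ^ 2)
      (-(2 * ((1+t) ^ p * ⟪A (u t), u t⟫ ^ γ)) * ⟪A (A (u t)), A (u t)⟫) t ∧
    HasDerivAt (fun s => ⟪A (A (u s)), A (u s)⟫)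
      (-(2 * ((1+t) ^ p * ⟪A (u t), u t⟫ ^ γ)) * ‖A (A (u t))‖ ^ 2) t ∧
    HasDerivAt (fun s => ‖u s‖ ^ 2)
      (-(2 * ((1+t) ^ p * ⟪A (u t), u t⟫ ^ γ)) * ⟪A (u t), u t⟫) t := by
  have ht' : (0:ℝ) < t := ht
  have hut : HasDerivAt u (u' t) t :=
    (hud t ht'.le).hasDerivAt (Ici_mem_nhds ht')
  have hAut : HasDerivAt (fun s => A (u s)) (A (u' t)) t :=
    A.hasFDerivAt.comp_hasDerivAt t hut
  have hAAut : HasDerivAt (fun s => A (A (u s))) (A (A (u' t))) t :=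
    A.hasFDerivAt.comp_hasDerivAt t hAut
  have hue := hueq t ht'.le
  constructor
  · have h := hAut.inner ℝ hut
    refine h.congr_deriv ?_
    rw [hA_sa (u' t) (u t), hue]
    simp only [inner_neg_left, inner_neg_right, real_inner_smul_left, real_inner_smul_right,
      real_inner_self_eq_norm_sq]
    ring
  constructor
  · have h := hAut.inner ℝ hAut
    have hfe : (fun s => ⟪A (u s), A (u s)⟫) = fun s => ‖A (u s)‖ ^ 2 := by
      funext s; exact real_inner_self_eq_norm_sq _
    rw [hfe] at h
    refine h.congr_deriv ?_
    rw [hue]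
    simp only [map_neg, _root_.map_smul, inner_neg_left, inner_neg_right, real_inner_smul_left,
      real_inner_smul_right]
    rw [real_inner_comm (A (A (u t))) (A (u t))]
    ring
  constructor
  · have h := hAAut.inner ℝ hAut
    refine h.congr_deriv ?_
    rw [hA_sa (A (u' t)) (A (u t)), hue]
    simp only [map_neg, _root_.map_smul, inner_neg_left, inner_neg_right, real_inner_smul_left,
      real_inner_smul_right, real_inner_self_eq_norm_sq]
    ring
  · have h := hut.inner ℝ hut
    have hfe : (fun s => ⟪u s, u s⟫) = fun s => ‖u s‖ ^ 2 := by
      funext s; exact real_inner_self_eq_norm_sq _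
    rw [hfe] at h
    refine h.congr_deriv ?_
    rw [hue]
    simp only [inner_neg_left, inner_neg_right, real_inner_smul_left, real_inner_smul_right]
    rw [hA_sa (u t) (u t)]  -- maybe not needed
    rw [real_inner_comm (A (u t)) (u t)]
    ring
/-- Integral estimates (3.6)–(3.8) for the parabolic problem:
the integrals `∫₀^∞ |u'|²(1+t)^p dt = ∫₀^∞ ⟨Au,u⟩^{2γ}|Au|²(1+t)^{3p} dt`,
`∫₀^∞ ⟨Au,u⟩^{3γ} ⟨A²u,Au⟩ (1+t)^{5p} dt` and
`∫₀^∞ [⟨Au,u⟩^{4γ}(1+t)^{7p} + ⟨Au,u⟩^{3γ}(1+t)^{5p}] |A²u|² dt` are all bounded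
by a constant `γ₅`. -/
theorem parabolic_integral_estimates
    {H : Type*} [NormedAddCommGroup H] [InnerProductSpace ℝ H] [CompleteSpace H]
    (A : H →L[ℝ] H)
    (hA_sa : ∀ x y : H, ⟪A x, y⟫ = ⟪x, A y⟫)
    (hA_nn : ∀ x : H, 0 ≤ ⟪A x, x⟫)
    (p γ : ℝ) (hp0 : 0 ≤ p) (hp1 : p ≤ 1) (hγ : 1 ≤ γ)
    (u₀ : H) (hmdg : 0 < ⟪A u₀, u₀⟫)
    (u u' : ℝ → H) (hu : IsParSolution A p γ u₀ u u') :
    ∃ γ₅ > 0,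
      IntegrableOn (fun t => ‖u' t‖ ^ 2 * (1+t) ^ p) (Set.Ici (0:ℝ)) ∧
      (∫ t in Set.Ici (0:ℝ), ‖u' t‖ ^ 2 * (1+t) ^ p)
        = ∫ t in Set.Ici (0:ℝ),
            ⟪A (u t), u t⟫ ^ (2*γ) * ‖A (u t)‖ ^ 2 * (1+t) ^ (3*p) ∧
      (∫ t in Set.Ici (0:ℝ), ‖u' t‖ ^ 2 * (1+t) ^ p) ≤ γ₅ ∧
      IntegrableOn
        (fun t => ⟪A (u t), u t⟫ ^ (3*γ) * ⟪A (A (u t)), A (u t)⟫ * (1+t) ^ (5*p))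
        (Set.Ici (0:ℝ)) ∧
      (∫ t in Set.Ici (0:ℝ),
          ⟪A (u t), u t⟫ ^ (3*γ) * ⟪A (A (u t)), A (u t)⟫ * (1+t) ^ (5*p)) ≤ γ₅ ∧
      IntegrableOn
        (fun t => (⟪A (u t), u t⟫ ^ (4*γ) * (1+t) ^ (7*p)
            + ⟪A (u t), u t⟫ ^ (3*γ) * (1+t) ^ (5*p)) * ‖A (A (u t))‖ ^ 2)
        (Set.Ici (0:ℝ)) ∧
      (∫ t in Set.Ici (0:ℝ),
          (⟪A (u t), u t⟫ ^ (4*γ) * (1+t) ^ (7*p)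
            + ⟪A (u t), u t⟫ ^ (3*γ) * (1+t) ^ (5*p)) * ‖A (A (u t))‖ ^ 2) ≤ γ₅ := by
  obtain ⟨hu0, hud, hu'c, hode⟩ := hu
  have hueq : ∀ t ∈ Set.Ici (0:ℝ),
      u' t = -(((1+t) ^ p * ⟪A (u t), u t⟫ ^ γ) • A (u t)) :=
    fun t ht => eq_neg_of_add_eq_zero_left (hode t ht)
  -- continuity library
  have hcu : ContinuousOn u (Set.Ici 0) := fun t ht => (hud t ht).continuousWithinAt
  have hcAu : ContinuousOn (fun t => A (u t)) (Set.Ici 0) := A.continuous.comp_continuousOn hcu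
  have hcAAu : ContinuousOn (fun t => A (A (u t))) (Set.Ici 0) :=
    A.continuous.comp_continuousOn hcAu
  have hca : ContinuousOn (fun t => ⟪A (u t), u t⟫) (Set.Ici 0) := hcAu.inner hcu
  have hcc : ContinuousOn (fun t => ⟪A (A (u t)), A (u t)⟫) (Set.Ici 0) := hcAAu.inner hcAu
  have hcb : ContinuousOn (fun t => ‖A (u t)‖ ^ 2) (Set.Ici 0) := hcAu.norm.pow 2
  have hcd : ContinuousOn (fun t => ‖A (A (u t))‖ ^ 2) (Set.Ici 0) := hcAAu.norm.pow 2
  have hcw : ∀ k : ℝ, ContinuousOn (fun t : ℝ => (1+t) ^ k) (Set.Ici 0) := by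
    intro k
    apply ContinuousOn.rpow_const ((continuous_const.add continuous_id).continuousOn)
    intro t ht
    have ht' : (0:ℝ) ≤ t := ht
    exact Or.inl (ne_of_gt (show (0:ℝ) < 1 + t by linarith))
  have hann : ∀ t, 0 ≤ ⟪A (u t), u t⟫ := fun t => hA_nn (u t)
  have hcnn : ∀ t, 0 ≤ ⟪A (A (u t)), A (u t)⟫ := fun t => hA_nn (A (u t))
  have hcaα : ∀ α : ℝ, 0 ≤ α → ContinuousOn (fun t => ⟪A (u t), u t⟫ ^ α) (Set.Ici 0) :=
    fun α hα => hca.rpow_const (fun t _ => Or.inr hα)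
  have hwn : ∀ (k : ℝ) (t : ℝ), t ∈ Set.Ici (0:ℝ) → 0 ≤ (1+t) ^ k := by
    intro k t ht
    have ht' : (0:ℝ) ≤ t := ht
    positivity
  have hwmono : ∀ t ∈ Set.Ici (0:ℝ), ∀ k k' : ℝ, k ≤ k' → (1+t) ^ k ≤ (1+t) ^ k' := by
    intro t ht k k' hk
    have ht' : (0:ℝ) ≤ t := ht
    exact Real.rpow_le_rpow_of_exponent_le (by linarith) hk
  have hII : ∀ (f : ℝ → ℝ), ContinuousOn f (Set.Ici 0) → ∀ {T : ℝ}, 0 ≤ T →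
      IntervalIntegrable f volume 0 T := fun f hf T hT =>
    (hf.mono (by rw [Set.uIcc_of_le hT]; exact Set.Icc_subset_Ici_self)).intervalIntegrable

  -- f0 := λ·a
  set f0 : ℝ → ℝ := fun t => (1+t) ^ p * ⟪A (u t), u t⟫ ^ γ * ⟪A (u t), u t⟫ with hf0def
  have hcf0 : ContinuousOn f0 (Set.Ici 0) := ((hcw p).mul (hcaα γ (by linarith))).mul hca
  have hder0 : ∀ t ∈ Set.Ioi (0:ℝ),
      HasDerivAt (fun s => ‖u s‖ ^ 2) ((fun _ => (0:ℝ)) t - 2 * f0 t) t := by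
    intro t ht
    have h := (par_derivs A hA_sa p γ u u' hud hueq ht).2.2.2
    convert h using 1
    simp only [hf0def]
    ring
  have hB0 : ∀ T, 0 ≤ T → (∫ t in (0:ℝ)..T, f0 t) ≤ ‖u₀‖ ^ 2 / 2 := by
    intro T hT
    have h := par_ftc_est (Φ := fun s => ‖u s‖ ^ 2) (f := f0) (r := fun _ => (0:ℝ))
      (hcu.norm.pow 2) (fun t _ => by positivity) hcf0 continuousOn_const hder0 hT
    simp only [intervalIntegral.integral_zero, hu0] at h
    linarith
  -- f1 and Φ1
  set f1 : ℝ → ℝ := fun t => ⟪A (u t), u t⟫ ^ (2*γ) * ‖A (u t)‖ ^ 2 * (1+t) ^ (3*p)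
    with hf1def
  set Φ1 : ℝ → ℝ := fun s => (1+s) ^ (2*p) * ⟪A (u s), u s⟫ ^ (γ+1) / (γ+1) with hΦ1def
  set r1 : ℝ → ℝ := fun s => 2*p/(γ+1) * ((1+s) ^ (2*p-1) * ⟪A (u s), u s⟫ ^ (γ+1))
    with hr1def
  have hcf1 : ContinuousOn f1 (Set.Ici 0) :=
    ((hcaα (2*γ) (by linarith)).mul hcb).mul (hcw (3*p))
  have hcΦ1 : ContinuousOn Φ1 (Set.Ici 0) :=
    ((hcw (2*p)).mul (hcaα (γ+1) (by linarith))).div_const (γ+1)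
  have hcr1 : ContinuousOn r1 (Set.Ici 0) :=
    continuousOn_const.mul ((hcw (2*p-1)).mul (hcaα (γ+1) (by linarith)))
  have hf1nn : ∀ t ∈ Set.Ici (0:ℝ), 0 ≤ f1 t := by
    intro t ht
    exact mul_nonneg (mul_nonneg (rpow_nonneg (hann t) _) (by positivity)) (hwn _ t ht)
  have hΦ1nn : ∀ t ∈ Set.Ici (0:ℝ), 0 ≤ Φ1 t := by
    intro t ht
    exact div_nonneg (mul_nonneg (hwn _ t ht) (rpow_nonneg (hann t) _)) (by linarith)
  have hder1 : ∀ t ∈ Set.Ioi (0:ℝ), HasDerivAt Φ1 (r1 t - 2 * f1 t) t := by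
    intro t ht
    have ht0 : (0:ℝ) < t := ht
    have hw1 : (0:ℝ) < 1+t := by linarith
    have ha := (par_derivs A hA_sa p γ u u' hud hueq ht).1
    have h1 : HasDerivAt (fun s : ℝ => 1+s) 1 t := (hasDerivAt_id t).const_add 1
    have hwd := h1.rpow_const (p := 2*p) (Or.inl (ne_of_gt hw1))
    have had := ha.rpow_const (p := γ+1) (Or.inr (by linarith : (1:ℝ) ≤ γ+1))
    have h := (hwd.mul had).div_const (γ+1)
    refine h.congr_deriv ?_
    rw [hr1def, hf1def]
    simp only []
    rw [show γ+1-1 = γ by ring]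
    rw [show (3:ℝ)*p = 2*p + p by ring, Real.rpow_add hw1]
    rw [show (2:ℝ)*γ = γ*2 by ring, Real.rpow_mul (hann t), Real.rpow_two]
    field_simp
    ring
  have hB1 : ∀ T, 0 ≤ T →
      (∫ t in (0:ℝ)..T, f1 t) ≤ (Φ1 0 + p * (‖u₀‖ ^ 2 / 2)) / 2 := by
    intro T hT
    have h := par_ftc_est hcΦ1 hΦ1nn hcf1 hcr1 hder1 hT
    have hle : ∀ x ∈ Set.Icc (0:ℝ) T, r1 x ≤ p * f0 x := by
      intro x hx
      have hx0 : (0:ℝ) ≤ x := hx.1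
      have hw1x : (0:ℝ) < 1+x := by linarith
      have e1 : (1+x) ^ (2*p-1) ≤ (1+x) ^ p := hwmono x hx0 _ _ (by linarith)
      have e2 : ⟪A (u x), u x⟫ ^ (γ+1) = ⟪A (u x), u x⟫ ^ γ * ⟪A (u x), u x⟫ := by
        rw [Real.rpow_add' (hann x) (by intro hc; linarith), Real.rpow_one]
      have key : 2*p/(γ+1) ≤ p := by
        rw [div_le_iff₀ (by linarith : (0:ℝ) < γ+1)]
        nlinarith
      have hBn : 0 ≤ (1+x) ^ (2*p-1) * ⟪A (u x), u x⟫ ^ (γ+1) :=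
        mul_nonneg (hwn _ x hx0) (rpow_nonneg (hann x) _)
      have hBB : (1+x) ^ (2*p-1) * ⟪A (u x), u x⟫ ^ (γ+1)
          ≤ (1+x) ^ p * ⟪A (u x), u x⟫ ^ (γ+1) :=
        mul_le_mul_of_nonneg_right e1 (rpow_nonneg (hann x) _)
      calc r1 x ≤ p * ((1+x) ^ p * ⟪A (u x), u x⟫ ^ (γ+1)) := by
            rw [hr1def]
            exact mul_le_mul key hBB hBn hp0
        _ = p * f0 x := by rw [hf0def]; simp only []; rw [e2]; ring
    have hmono : (∫ t in (0:ℝ)..T, r1 t) ≤ ∫ t in (0:ℝ)..T, p * f0 t :=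
      intervalIntegral.integral_mono_on hT (hII r1 hcr1 hT)
        ((hII f0 hcf0 hT).const_mul p) hle
    rw [intervalIntegral.integral_const_mul p f0] at hmono
    have h0 := hB0 T hT
    have : (∫ t in (0:ℝ)..T, r1 t) ≤ p * (‖u₀‖ ^ 2 / 2) :=
      le_trans hmono (mul_le_mul_of_nonneg_left h0 hp0)
    linarith

  -- f2 and Φ2
  set f2 : ℝ → ℝ := fun t => ⟪A (u t), u t⟫ ^ (3*γ) * ⟪A (A (u t)), A (u t)⟫ * (1+t) ^ (5*p)
    with hf2def
  set Φ2 : ℝ → ℝ := fun s => (1+s) ^ (4*p) * ⟪A (u s), u s⟫ ^ (2*γ) * ‖A (u s)‖ ^ 2 with hΦ2def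
  set r2 : ℝ → ℝ := fun s => 4*p*((1+s) ^ (4*p-1) * ⟪A (u s), u s⟫ ^ (2*γ) * ‖A (u s)‖ ^ 2)
      - 4*γ*((1+s) ^ (5*p) * ⟪A (u s), u s⟫ ^ (3*γ-1) * (‖A (u s)‖ ^ 2) ^ 2) with hr2def
  have hcf2 : ContinuousOn f2 (Set.Ici 0) :=
    ((hcaα (3*γ) (by linarith)).mul hcc).mul (hcw (5*p))
  have hcΦ2 : ContinuousOn Φ2 (Set.Ici 0) :=
    ((hcw (4*p)).mul (hcaα (2*γ) (by linarith))).mul hcb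
  have hcr2 : ContinuousOn r2 (Set.Ici 0) :=
    (continuousOn_const.mul (((hcw (4*p-1)).mul (hcaα (2*γ) (by linarith))).mul hcb)).sub
      (continuousOn_const.mul (((hcw (5*p)).mul (hcaα (3*γ-1) (by linarith))).mul (hcb.pow 2)))
  have hf2nn : ∀ t ∈ Set.Ici (0:ℝ), 0 ≤ f2 t := by
    intro t ht
    exact mul_nonneg (mul_nonneg (rpow_nonneg (hann t) _) (hcnn t)) (hwn _ t ht)
  have hΦ2nn : ∀ t ∈ Set.Ici (0:ℝ), 0 ≤ Φ2 t := by
    intro t ht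
    exact mul_nonneg (mul_nonneg (hwn _ t ht) (rpow_nonneg (hann t) _)) (by positivity)
  have hder2 : ∀ t ∈ Set.Ioi (0:ℝ), HasDerivAt Φ2 (r2 t - 2 * f2 t) t := by
    intro t ht
    have ht0 : (0:ℝ) < t := ht
    have hw1 : (0:ℝ) < 1+t := by linarith
    obtain ⟨ha, hb, -, -⟩ := par_derivs A hA_sa p γ u u' hud hueq ht
    have h1 : HasDerivAt (fun s : ℝ => 1+s) 1 t := (hasDerivAt_id t).const_add 1
    have hwd := h1.rpow_const (p := 4*p) (Or.inl (ne_of_gt hw1))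
    have had := ha.rpow_const (p := 2*γ) (Or.inr (by linarith : (1:ℝ) ≤ 2*γ))
    have h := (hwd.mul had).mul hb
    refine h.congr_deriv ?_
    rw [Pi.mul_apply]
    rw [hr2def, hf2def]
    simp only []
    rw [show (3:ℝ)*γ - 1 = (2*γ-1) + γ by ring,
      Real.rpow_add' (hann t) (by intro hc; linarith)]
    rw [show (3:ℝ)*γ = 2*γ + γ by ring,
      Real.rpow_add' (hann t) (by intro hc; linarith)]
    rw [show (5:ℝ)*p = 4*p + p by ring, Real.rpow_add hw1]
    ring
  have hB2 : ∀ T, 0 ≤ T →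
      (∫ t in (0:ℝ)..T, f2 t)
        ≤ (Φ2 0 + 4*p*((Φ1 0 + p * (‖u₀‖ ^ 2 / 2)) / 2)) / 2 := by
    intro T hT
    have h := par_ftc_est hcΦ2 hΦ2nn hcf2 hcr2 hder2 hT
    have hle : ∀ x ∈ Set.Icc (0:ℝ) T, r2 x ≤ 4*p * f1 x := by
      intro x hx
      have hx0 : (0:ℝ) ≤ x := hx.1
      have e1 : (1+x) ^ (4*p-1) ≤ (1+x) ^ (3*p) := hwmono x hx0 _ _ (by linarith)
      have hfirst : 4*p*((1+x) ^ (4*p-1) * ⟪A (u x), u x⟫ ^ (2*γ) * ‖A (u x)‖ ^ 2)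
          ≤ 4*p*((1+x) ^ (3*p) * ⟪A (u x), u x⟫ ^ (2*γ) * ‖A (u x)‖ ^ 2) := by
        apply mul_le_mul_of_nonneg_left ?_ (by linarith)
        apply mul_le_mul_of_nonneg_right
          (mul_le_mul_of_nonneg_right e1 (rpow_nonneg (hann x) _)) (by positivity)
      have hsecond : 0 ≤ 4*γ*((1+x) ^ (5*p) * ⟪A (u x), u x⟫ ^ (3*γ-1) * (‖A (u x)‖ ^ 2) ^ 2) := by
        apply mul_nonneg (by linarith)
        exact mul_nonneg (mul_nonneg (hwn _ x hx0) (rpow_nonneg (hann x) _)) (by positivity)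
      have heq : 4*p*((1+x) ^ (3*p) * ⟪A (u x), u x⟫ ^ (2*γ) * ‖A (u x)‖ ^ 2) = 4*p * f1 x := by
        rw [hf1def]; simp only []; ring
      rw [hr2def]
      simp only []
      linarith [hfirst, hsecond, heq.le, heq.ge]
    have hmono : (∫ t in (0:ℝ)..T, r2 t) ≤ ∫ t in (0:ℝ)..T, 4*p * f1 t :=
      intervalIntegral.integral_mono_on hT (hII r2 hcr2 hT)
        ((hII f1 hcf1 hT).const_mul (4*p)) hle
    rw [intervalIntegral.integral_const_mul (4*p) f1] at hmono
    have h1 := hB1 T hT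
    have : (∫ t in (0:ℝ)..T, r2 t) ≤ 4*p*((Φ1 0 + p * (‖u₀‖ ^ 2 / 2)) / 2) :=
      le_trans hmono (mul_le_mul_of_nonneg_left h1 (by linarith))
    linarith

  -- f3 and Φ3
  set f3a : ℝ → ℝ := fun s => ⟪A (u s), u s⟫ ^ (4*γ) * (1+s) ^ (7*p) * ‖A (A (u s))‖ ^ 2
    with hf3adef
  set f3b : ℝ → ℝ := fun s => ⟪A (u s), u s⟫ ^ (3*γ) * (1+s) ^ (5*p) * ‖A (A (u s))‖ ^ 2
    with hf3bdef
  set Φ3 : ℝ → ℝ := fun s => (1+s) ^ (6*p) * ⟪A (u s), u s⟫ ^ (3*γ) * ⟪A (A (u s)), A (u s)⟫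
    with hΦ3def
  set r3 : ℝ → ℝ := fun s => 6*p*((1+s) ^ (6*p-1) * ⟪A (u s), u s⟫ ^ (3*γ) * ⟪A (A (u s)), A (u s)⟫)
      - 6*γ*((1+s) ^ (7*p) * ⟪A (u s), u s⟫ ^ (4*γ-1) * ‖A (u s)‖ ^ 2 * ⟪A (A (u s)), A (u s)⟫)
    with hr3def
  have hcf3a : ContinuousOn f3a (Set.Ici 0) :=
    ((hcaα (4*γ) (by linarith)).mul (hcw (7*p))).mul hcd
  have hcf3b : ContinuousOn f3b (Set.Ici 0) :=
    ((hcaα (3*γ) (by linarith)).mul (hcw (5*p))).mul hcd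
  have hcΦ3 : ContinuousOn Φ3 (Set.Ici 0) :=
    ((hcw (6*p)).mul (hcaα (3*γ) (by linarith))).mul hcc
  have hcr3 : ContinuousOn r3 (Set.Ici 0) :=
    (continuousOn_const.mul (((hcw (6*p-1)).mul (hcaα (3*γ) (by linarith))).mul hcc)).sub
      (continuousOn_const.mul ((((hcw (7*p)).mul (hcaα (4*γ-1) (by linarith))).mul hcb).mul hcc))
  have hf3ann : ∀ t ∈ Set.Ici (0:ℝ), 0 ≤ f3a t := by
    intro t ht
    exact mul_nonneg (mul_nonneg (rpow_nonneg (hann t) _) (hwn _ t ht)) (by positivity)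
  have hf3bnn : ∀ t ∈ Set.Ici (0:ℝ), 0 ≤ f3b t := by
    intro t ht
    exact mul_nonneg (mul_nonneg (rpow_nonneg (hann t) _) (hwn _ t ht)) (by positivity)
  have hΦ3nn : ∀ t ∈ Set.Ici (0:ℝ), 0 ≤ Φ3 t := by
    intro t ht
    exact mul_nonneg (mul_nonneg (hwn _ t ht) (rpow_nonneg (hann t) _)) (hcnn t)
  have hder3 : ∀ t ∈ Set.Ioi (0:ℝ), HasDerivAt Φ3 (r3 t - 2 * f3a t) t := by
    intro t ht
    have ht0 : (0:ℝ) < t := ht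
    have hw1 : (0:ℝ) < 1+t := by linarith
    obtain ⟨ha, -, hc', -⟩ := par_derivs A hA_sa p γ u u' hud hueq ht
    have h1 : HasDerivAt (fun s : ℝ => 1+s) 1 t := (hasDerivAt_id t).const_add 1
    have hwd := h1.rpow_const (p := 6*p) (Or.inl (ne_of_gt hw1))
    have had := ha.rpow_const (p := 3*γ) (Or.inr (by linarith : (1:ℝ) ≤ 3*γ))
    have h := (hwd.mul had).mul hc'
    refine h.congr_deriv ?_
    rw [Pi.mul_apply]
    rw [hr3def, hf3adef]
    simp only []
    rw [show (4:ℝ)*γ - 1 = (3*γ-1) + γ by ring,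
      Real.rpow_add' (hann t) (by intro hc; linarith)]
    rw [show (4:ℝ)*γ = 3*γ + γ by ring,
      Real.rpow_add' (hann t) (by intro hc; linarith)]
    rw [show (7:ℝ)*p = 6*p + p by ring, Real.rpow_add hw1]
    ring
  have hB3a : ∀ T, 0 ≤ T →
      (∫ t in (0:ℝ)..T, f3a t)
        ≤ (Φ3 0 + 6*p*((Φ2 0 + 4*p*((Φ1 0 + p * (‖u₀‖ ^ 2 / 2)) / 2)) / 2)) / 2 := by
    intro T hT
    have h := par_ftc_est hcΦ3 hΦ3nn hcf3a hcr3 hder3 hT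
    have hle : ∀ x ∈ Set.Icc (0:ℝ) T, r3 x ≤ 6*p * f2 x := by
      intro x hx
      have hx0 : (0:ℝ) ≤ x := hx.1
      have e1 : (1+x) ^ (6*p-1) ≤ (1+x) ^ (5*p) := hwmono x hx0 _ _ (by linarith)
      have hfirst : 6*p*((1+x) ^ (6*p-1) * ⟪A (u x), u x⟫ ^ (3*γ) * ⟪A (A (u x)), A (u x)⟫)
          ≤ 6*p*((1+x) ^ (5*p) * ⟪A (u x), u x⟫ ^ (3*γ) * ⟪A (A (u x)), A (u x)⟫) := by
        apply mul_le_mul_of_nonneg_left ?_ (by linarith)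
        apply mul_le_mul_of_nonneg_right
          (mul_le_mul_of_nonneg_right e1 (rpow_nonneg (hann x) _)) (hcnn x)
      have hsecond : 0 ≤ 6*γ*((1+x) ^ (7*p) * ⟪A (u x), u x⟫ ^ (4*γ-1) * ‖A (u x)‖ ^ 2
          * ⟪A (A (u x)), A (u x)⟫) := by
        apply mul_nonneg (by linarith)
        exact mul_nonneg (mul_nonneg (mul_nonneg (hwn _ x hx0) (rpow_nonneg (hann x) _))
          (by positivity)) (hcnn x)
      have heq : 6*p*((1+x) ^ (5*p) * ⟪A (u x), u x⟫ ^ (3*γ) * ⟪A (A (u x)), A (u x)⟫)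
          = 6*p * f2 x := by
        rw [hf2def]; simp only []; ring
      rw [hr3def]
      simp only []
      linarith [hfirst, hsecond, heq.le, heq.ge]
    have hmono : (∫ t in (0:ℝ)..T, r3 t) ≤ ∫ t in (0:ℝ)..T, 6*p * f2 t :=
      intervalIntegral.integral_mono_on hT (hII r3 hcr3 hT)
        ((hII f2 hcf2 hT).const_mul (6*p)) hle
    rw [intervalIntegral.integral_const_mul (6*p) f2] at hmono
    have h2 := hB2 T hT
    have : (∫ t in (0:ℝ)..T, r3 t)
        ≤ 6*p*((Φ2 0 + 4*p*((Φ1 0 + p * (‖u₀‖ ^ 2 / 2)) / 2)) / 2) :=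
      le_trans hmono (mul_le_mul_of_nonneg_left h2 (by linarith))
    linarith
  have hB3b : ∀ T, 0 ≤ T →
      (∫ t in (0:ℝ)..T, f3b t)
        ≤ ‖A‖ * ((Φ2 0 + 4*p*((Φ1 0 + p * (‖u₀‖ ^ 2 / 2)) / 2)) / 2) := by
    intro T hT
    have hle : ∀ x ∈ Set.Icc (0:ℝ) T, f3b x ≤ ‖A‖ * f2 x := by
      intro x hx
      have hx0 : (0:ℝ) ≤ x := hx.1
      have hdc : ‖A (A (u x))‖ ^ 2 ≤ ‖A‖ * ⟪A (A (u x)), A (u x)⟫ :=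
        par_sq_norm_le A hA_sa hA_nn (A (u x))
      have hwa : 0 ≤ ⟪A (u x), u x⟫ ^ (3*γ) * (1+x) ^ (5*p) :=
        mul_nonneg (rpow_nonneg (hann x) _) (hwn _ x hx0)
      calc f3b x = (⟪A (u x), u x⟫ ^ (3*γ) * (1+x) ^ (5*p)) * ‖A (A (u x))‖ ^ 2 := by
            rw [hf3bdef]
        _ ≤ (⟪A (u x), u x⟫ ^ (3*γ) * (1+x) ^ (5*p)) * (‖A‖ * ⟪A (A (u x)), A (u x)⟫) :=
            mul_le_mul_of_nonneg_left hdc hwa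
        _ = ‖A‖ * f2 x := by rw [hf2def]; simp only []; ring
    have hmono : (∫ t in (0:ℝ)..T, f3b t) ≤ ∫ t in (0:ℝ)..T, ‖A‖ * f2 t :=
      intervalIntegral.integral_mono_on hT (hII f3b hcf3b hT)
        ((hII f2 hcf2 hT).const_mul ‖A‖) hle
    rw [intervalIntegral.integral_const_mul ‖A‖ f2] at hmono
    exact le_trans hmono (mul_le_mul_of_nonneg_left (hB2 T hT) (norm_nonneg A))

  set f3 : ℝ → ℝ := fun t => (⟪A (u t), u t⟫ ^ (4*γ) * (1+t) ^ (7*p)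
      + ⟪A (u t), u t⟫ ^ (3*γ) * (1+t) ^ (5*p)) * ‖A (A (u t))‖ ^ 2 with hf3def
  set g1 : ℝ → ℝ := fun t => ‖u' t‖ ^ 2 * (1+t) ^ p with hg1def
  have hf3eq : ∀ x, f3 x = f3a x + f3b x := by
    intro x
    rw [hf3def, hf3adef, hf3bdef]
    simp only []
    ring
  have hcf3 : ContinuousOn f3 (Set.Ici 0) := by
    have : f3 = fun x => f3a x + f3b x := funext hf3eq
    rw [this]
    exact hcf3a.add hcf3b
  have hf3nn : ∀ t ∈ Set.Ici (0:ℝ), 0 ≤ f3 t := by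
    intro t ht
    rw [hf3eq t]
    exact add_nonneg (hf3ann t ht) (hf3bnn t ht)
  have hB3 : ∀ T, 0 ≤ T → (∫ t in (0:ℝ)..T, f3 t)
      ≤ (Φ3 0 + 6*p*((Φ2 0 + 4*p*((Φ1 0 + p * (‖u₀‖ ^ 2 / 2)) / 2)) / 2)) / 2
        + ‖A‖ * ((Φ2 0 + 4*p*((Φ1 0 + p * (‖u₀‖ ^ 2 / 2)) / 2)) / 2) := by
    intro T hT
    rw [intervalIntegral.integral_congr (g := fun x => f3a x + f3b x) (fun x _ => hf3eq x)]
    rw [intervalIntegral.integral_add (hII f3a hcf3a hT) (hII f3b hcf3b hT)]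
    exact add_le_add (hB3a T hT) (hB3b T hT)
  have hg1f1 : Set.EqOn g1 f1 (Set.Ici 0) := by
    intro x hx
    have hx0 : (0:ℝ) ≤ x := hx
    have hw1 : (0:ℝ) < 1+x := by linarith
    simp only [hg1def, hf1def]
    rw [hueq x hx, norm_neg, norm_smul, Real.norm_eq_abs,
      abs_of_nonneg (mul_nonneg (hwn p x hx) (rpow_nonneg (hann x) _))]
    rw [show (3:ℝ)*p = 2*p + p by ring, Real.rpow_add hw1,
      show (2:ℝ)*p = p*2 by ring, Real.rpow_mul hw1.le, Real.rpow_two]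
    rw [show (2:ℝ)*γ = γ*2 by ring, Real.rpow_mul (hann x), Real.rpow_two]
    ring
  obtain ⟨hint1, hle1⟩ := par_int_bound f1 hcf1 hf1nn _ hB1
  obtain ⟨hint2, hle2⟩ := par_int_bound f2 hcf2 hf2nn _ hB2
  obtain ⟨hint3, hle3⟩ := par_int_bound f3 hcf3 hf3nn _ hB3
  have hIeq : (∫ t in Set.Ici (0:ℝ), g1 t) = ∫ t in Set.Ici (0:ℝ), f1 t :=
    setIntegral_congr_fun measurableSet_Ici hg1f1
  refine ⟨|(Φ1 0 + p * (‖u₀‖ ^ 2 / 2)) / 2|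
      + |(Φ2 0 + 4*p*((Φ1 0 + p * (‖u₀‖ ^ 2 / 2)) / 2)) / 2|
      + |(Φ3 0 + 6*p*((Φ2 0 + 4*p*((Φ1 0 + p * (‖u₀‖ ^ 2 / 2)) / 2)) / 2)) / 2
        + ‖A‖ * ((Φ2 0 + 4*p*((Φ1 0 + p * (‖u₀‖ ^ 2 / 2)) / 2)) / 2)| + 1,
    by positivity, ?_, ?_, ?_, ?_, ?_, ?_, ?_⟩
  · exact hint1.congr_fun hg1f1.symm measurableSet_Ici
  · exact hIeq
  · rw [hIeq]
    refine le_trans hle1 ?_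
    have := le_abs_self ((Φ1 0 + p * (‖u₀‖ ^ 2 / 2)) / 2)
    have h2 := abs_nonneg ((Φ2 0 + 4*p*((Φ1 0 + p * (‖u₀‖ ^ 2 / 2)) / 2)) / 2)
    have h3 := abs_nonneg ((Φ3 0 + 6*p*((Φ2 0 + 4*p*((Φ1 0 + p * (‖u₀‖ ^ 2 / 2)) / 2)) / 2)) / 2
        + ‖A‖ * ((Φ2 0 + 4*p*((Φ1 0 + p * (‖u₀‖ ^ 2 / 2)) / 2)) / 2))
    linarith
  · exact hint2
  · refine le_trans hle2 ?_
    have := le_abs_self ((Φ2 0 + 4*p*((Φ1 0 + p * (‖u₀‖ ^ 2 / 2)) / 2)) / 2)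
    have h1 := abs_nonneg ((Φ1 0 + p * (‖u₀‖ ^ 2 / 2)) / 2)
    have h3 := abs_nonneg ((Φ3 0 + 6*p*((Φ2 0 + 4*p*((Φ1 0 + p * (‖u₀‖ ^ 2 / 2)) / 2)) / 2)) / 2
        + ‖A‖ * ((Φ2 0 + 4*p*((Φ1 0 + p * (‖u₀‖ ^ 2 / 2)) / 2)) / 2))
    linarith
  · exact hint3
  · refine le_trans hle3 ?_
    have := le_abs_self ((Φ3 0 + 6*p*((Φ2 0 + 4*p*((Φ1 0 + p * (‖u₀‖ ^ 2 / 2)) / 2)) / 2)) / 2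
        + ‖A‖ * ((Φ2 0 + 4*p*((Φ1 0 + p * (‖u₀‖ ^ 2 / 2)) / 2)) / 2))
    have h1 := abs_nonneg ((Φ1 0 + p * (‖u₀‖ ^ 2 / 2)) / 2)
    have h2 := abs_nonneg ((Φ2 0 + 4*p*((Φ1 0 + p * (‖u₀‖ ^ 2 / 2)) / 2)) / 2)
    linarith
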